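/- Anderson's recursion for covariance matrices: let A be unit upper-triangular partitioned in blocks (a, b, c) and Δ diagonal positive definite with conforming blocks, and let Σ = A⁻¹ Δ A⁻ᵀ be the covariance matrix of Y solving AY = ε with cov(ε) = Δ. With Π_{a|b.c} = −(A_{aa})⁻¹A_{ab}, the conditional covariance Σ_{aa|c} := Σ_{aa} − Σ_{ac}(Σ_{cc})⁻¹Σ_{ca} satisfies Σ_{aa|c} = (A_{aa})⁻¹Δ_{aa}(A_{aa})⁻ᵀ + Π_{a|b.c} ((A_{bb})⁻¹Δ_{bb}(A_{bb})⁻ᵀ) Π_{a|b.c}ᵀ. -/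

import Mathlib

open Matrix

/-- A unit upper-triangular real matrix has unit determinant. -/
lemma det_unitUpper {n : ℕ} (M : Matrix (Fin n) (Fin n) ℝ)
    (h1 : ∀ i, M i i = 1) (h0 : ∀ i j, j < i → M i j = 0) : IsUnit M.det := by
  have ht : M.BlockTriangular id := fun i j h => h0 i j h
  rw [Matrix.det_of_upperTriangular ht]
  simp [h1]

lemma fromColumns_add' {m n₁ n₂ : Type*} (A C : Matrix m n₁ ℝ) (B D : Matrix m n₂ ℝ) :
    fromCols A B + fromCols C D = fromCols (A + C) (B + D) := by
  ext i (j | j) <;> simp [fromCols]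

/-- Anderson's recursion for covariance matrices:
for `Σ = A⁻¹ Δ A⁻ᵀ` with `A` unit upper-triangular in order-respecting blocks `(a,b,c)`
and `Δ` diagonal positive definite,
`Σ_{aa|c} = A_aa⁻¹ Δ_aa A_aa⁻ᵀ + Pi_ab_{a|b.c} (A_bb⁻¹ Δ_bb A_bb⁻ᵀ) Pi_ab_{a|b.c}ᵀ`. -/
theorem anderson_recursion
    {p q r : ℕ}
    (A : Matrix (Fin p ⊕ (Fin q ⊕ Fin r)) (Fin p ⊕ (Fin q ⊕ Fin r)) ℝ)
    (d : Fin p ⊕ (Fin q ⊕ Fin r) → ℝ) (hd : ∀ i, 0 < d i)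
    -- injections into the three blocks
    (ia : Fin p → Fin p ⊕ (Fin q ⊕ Fin r)) (hia : ia = Sum.inl)
    (ib : Fin q → Fin p ⊕ (Fin q ⊕ Fin r)) (hib : ib = fun j => Sum.inr (Sum.inl j))
    (ic : Fin r → Fin p ⊕ (Fin q ⊕ Fin r)) (hic : ic = fun j => Sum.inr (Sum.inr j))
    -- A is block upper-triangular in the ordered blocks (a, b, c)
    (hba : ∀ i j, A (ib i) (ia j) = 0)
    (hca : ∀ i j, A (ic i) (ia j) = 0)
    (hcb : ∀ i j, A (ic i) (ib j) = 0)
    -- the diagonal blocks are unit upper-triangular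
    (haa1 : ∀ i, A (ia i) (ia i) = 1) (haa0 : ∀ i j : Fin p, j < i → A (ia i) (ia j) = 0)
    (hbb1 : ∀ i, A (ib i) (ib i) = 1) (hbb0 : ∀ i j : Fin q, j < i → A (ib i) (ib j) = 0)
    (hcc1 : ∀ i, A (ic i) (ic i) = 1) (hcc0 : ∀ i j : Fin r, j < i → A (ic i) (ic j) = 0) :
    letI Sig := A⁻¹ * Matrix.diagonal d * (A⁻¹)ᵀ
    letI Saa := Sig.submatrix ia ia
    letI Sac := Sig.submatrix ia ic
    letI Sca := Sig.submatrix ic ia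
    letI Scc := Sig.submatrix ic ic
    letI Aaa := A.submatrix ia ia
    letI Aab := A.submatrix ia ib
    letI Abb := A.submatrix ib ib
    letI Pi_ab := -(Aaa⁻¹ * Aab)
    Saa - Sac * Scc⁻¹ * Sca
      = Aaa⁻¹ * Matrix.diagonal (fun i => d (ia i)) * (Aaa⁻¹)ᵀ
        + Pi_ab * (Abb⁻¹ * Matrix.diagonal (fun i => d (ib i)) * (Abb⁻¹)ᵀ) * Pi_abᵀ := by
  subst hia hib hic
  dsimp only
  set A11 : Matrix (Fin p) (Fin p) ℝ := A.submatrix Sum.inl Sum.inl with hA11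
  set A12 : Matrix (Fin p) (Fin q) ℝ := A.submatrix Sum.inl (fun j => Sum.inr (Sum.inl j)) with hA12
  set A13 : Matrix (Fin p) (Fin r) ℝ := A.submatrix Sum.inl (fun j => Sum.inr (Sum.inr j)) with hA13
  set A22 : Matrix (Fin q) (Fin q) ℝ := A.submatrix (fun j => Sum.inr (Sum.inl j)) (fun j => Sum.inr (Sum.inl j)) with hA22
  set A23 : Matrix (Fin q) (Fin r) ℝ := A.submatrix (fun j => Sum.inr (Sum.inl j)) (fun j => Sum.inr (Sum.inr j)) with hA23
  set A33 : Matrix (Fin r) (Fin r) ℝ := A.submatrix (fun j => Sum.inr (Sum.inr j)) (fun j => Sum.inr (Sum.inr j)) with hA33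
  set d1 : Fin p → ℝ := fun i => d (Sum.inl i) with hd1
  set d2 : Fin q → ℝ := fun i => d (Sum.inr (Sum.inl i)) with hd2
  set d3 : Fin r → ℝ := fun i => d (Sum.inr (Sum.inr i)) with hd3
  have u11 : IsUnit A11.det := det_unitUpper _ haa1 haa0
  have u22 : IsUnit A22.det := det_unitUpper _ hbb1 hbb0
  have u33 : IsUnit A33.det := det_unitUpper _ hcc1 hcc0
  set B11 : Matrix (Fin p) (Fin p) ℝ := A11⁻¹ with hB11
  set B22 : Matrix (Fin q) (Fin q) ℝ := A22⁻¹ with hB22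
  set B33 : Matrix (Fin r) (Fin r) ℝ := A33⁻¹ with hB33
  set B12 : Matrix (Fin p) (Fin q) ℝ := -(B11 * A12 * B22) with hB12
  set B23 : Matrix (Fin q) (Fin r) ℝ := -(B22 * A23 * B33) with hB23
  set B13 : Matrix (Fin p) (Fin r) ℝ := B11 * (A12 * B22 * A23 - A13) * B33 with hB13
  set M : Matrix (Fin p ⊕ (Fin q ⊕ Fin r)) (Fin p ⊕ (Fin q ⊕ Fin r)) ℝ :=
    fromBlocks B11 (fromCols B12 B13) 0 (fromBlocks B22 B23 0 B33) with hM
  have hA : A = fromBlocks A11 (fromCols A12 A13) 0 (fromBlocks A22 A23 0 A33) := by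
    ext i j
    rcases i with i | i | i <;> rcases j with j | j | j <;>
      simp [fromBlocks, fromCols, hba, hca, hcb, hA11, hA12, hA13, hA22, hA23, hA33]
  have hD : Matrix.diagonal d = fromBlocks (Matrix.diagonal d1) 0 0
      (fromBlocks (Matrix.diagonal d2) 0 0 (Matrix.diagonal d3)) := by
    ext i j
    rcases i with i | i | i <;> rcases j with j | j | j <;>
      simp [fromBlocks, Matrix.diagonal_apply, hd1, hd2, hd3, Sum.inl.injEq, Sum.inr.injEq]
  have h1 : A11 * B11 = 1 := Matrix.mul_nonsing_inv _ u11
  have h2 : A22 * B22 = 1 := Matrix.mul_nonsing_inv _ u22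
  have h3 : A33 * B33 = 1 := Matrix.mul_nonsing_inv _ u33
  have key : A * M = 1 := by
    rw [hA, hM, fromBlocks_multiply]
    have c11 : A11 * B11 + fromCols A12 A13 * (0 : Matrix (Fin q ⊕ Fin r) (Fin p) ℝ) = 1 := by simp [h1]
    have c21 : (0 : Matrix (Fin q ⊕ Fin r) (Fin p) ℝ) * B11 + fromBlocks A22 A23 0 A33 * (0 : Matrix (Fin q ⊕ Fin r) (Fin p) ℝ) = 0 := by
      simp
    have c22 : (0 : Matrix (Fin q ⊕ Fin r) (Fin p) ℝ) * fromCols B12 B13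
        + fromBlocks A22 A23 0 A33 * fromBlocks B22 B23 0 B33 = 1 := by
      rw [Matrix.zero_mul, zero_add, fromBlocks_multiply]
      have e : A22 * B23 + A23 * B33 = 0 := by
        simp [hB23, Matrix.mul_neg, ← Matrix.mul_assoc, h2]
      rw [← fromBlocks_one (l := Fin q) (m := Fin r) (α := ℝ)]
      simp only [Matrix.mul_zero, add_zero, Matrix.zero_mul, zero_add, h2, h3, e]
    have c12 : A11 * fromCols B12 B13 + fromCols A12 A13 * fromBlocks B22 B23 0 B33 = 0 := by
      rw [mul_fromCols, fromCols_mul_fromBlocks, fromColumns_add']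
      have e1 : A11 * B12 + (A12 * B22 + A13 * (0 : Matrix (Fin r) (Fin q) ℝ)) = 0 := by
        simp [hB12, Matrix.mul_neg, ← Matrix.mul_assoc, h1]
      have e2 : A11 * B13 + (A12 * B23 + A13 * B33) = 0 := by
        rw [hB13, hB23]
        simp only [Matrix.mul_neg, ← Matrix.mul_assoc, h1, Matrix.one_mul, Matrix.sub_mul]
        abel
      rw [e1, e2, fromCols_zero]
    rw [c11, c12, c21, c22, fromBlocks_one]
  have hInv : A⁻¹ = M := inv_eq_right_inv key
  set Δ1 := Matrix.diagonal d1
  set Δ2 := Matrix.diagonal d2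
  set Δ3 := Matrix.diagonal d3
  have hSigEq : A⁻¹ * Matrix.diagonal d * (A⁻¹)ᵀ = fromBlocks
      (B11 * Δ1 * B11ᵀ + (B12 * Δ2 * B12ᵀ + B13 * Δ3 * B13ᵀ))
      (fromCols (B12 * Δ2 * B22ᵀ + B13 * Δ3 * B23ᵀ) (B13 * Δ3 * B33ᵀ))
      (fromRows (B22 * Δ2 * B12ᵀ + B23 * Δ3 * B13ᵀ) (B33 * Δ3 * B13ᵀ))
      (fromBlocks (B22 * Δ2 * B22ᵀ + B23 * Δ3 * B23ᵀ) (B23 * Δ3 * B33ᵀ)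
        (B33 * Δ3 * B23ᵀ) (B33 * Δ3 * B33ᵀ)) := by
    rw [hInv, hD, hM]
    simp only [fromBlocks_transpose, transpose_fromCols, Matrix.transpose_zero,
      fromBlocks_multiply, fromCols_mul_fromBlocks, fromBlocks_mul_fromRows,
      fromCols_mul_fromRows, mul_fromCols, Matrix.mul_zero, Matrix.zero_mul,
      add_zero, zero_add]
  set Sig := A⁻¹ * Matrix.diagonal d * (A⁻¹)ᵀ with hSig
  have hSaa : Sig.submatrix Sum.inl Sum.inl
      = B11 * Δ1 * B11ᵀ + (B12 * Δ2 * B12ᵀ + B13 * Δ3 * B13ᵀ) := by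
    ext i j; rw [hSigEq]; simp [fromBlocks]
  have hSac : Sig.submatrix Sum.inl (fun j => Sum.inr (Sum.inr j)) = B13 * Δ3 * B33ᵀ := by
    ext i j; rw [hSigEq]; simp [fromBlocks, fromCols]
  have hSca : Sig.submatrix (fun j => Sum.inr (Sum.inr j)) Sum.inl = B33 * Δ3 * B13ᵀ := by
    ext i j; rw [hSigEq]; simp [fromBlocks, fromRows_apply_inr]
  have hScc : Sig.submatrix (fun j => Sum.inr (Sum.inr j)) (fun j => Sum.inr (Sum.inr j))
      = B33 * Δ3 * B33ᵀ := by
    ext i j; rw [hSigEq]; simp [fromBlocks]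
  have u33' : IsUnit B33.det := A33.isUnit_nonsing_inv_det u33
  have u33T : IsUnit B33ᵀ.det := by rwa [Matrix.det_transpose]
  have uΔ3 : IsUnit Δ3.det := by
    rw [Matrix.det_diagonal]
    exact isUnit_iff_ne_zero.2 (Finset.prod_pos (fun i _ => hd _)).ne'
  have hSchur : Sig.submatrix Sum.inl (fun j => Sum.inr (Sum.inr j))
      * (Sig.submatrix (fun j => Sum.inr (Sum.inr j)) (fun j => Sum.inr (Sum.inr j)))⁻¹
      * Sig.submatrix (fun j => Sum.inr (Sum.inr j)) Sum.inl = B13 * Δ3 * B13ᵀ := by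
    rw [hSac, hSca, hScc, Matrix.mul_inv_rev, Matrix.mul_inv_rev]
    simp only [Matrix.mul_assoc]
    rw [Matrix.mul_nonsing_inv_cancel_left _ _ u33T,
      Matrix.mul_nonsing_inv_cancel_left _ _ uΔ3,
      Matrix.nonsing_inv_mul_cancel_left _ _ u33']
  rw [hSaa, hSchur, ← add_assoc, add_sub_cancel_right]
  rw [hB12]
  simp only [Matrix.transpose_neg, Matrix.transpose_mul, Matrix.neg_mul, Matrix.mul_neg,
    neg_neg, Matrix.mul_assoc]
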